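/- For orthogonal projections P and Q on a finite-dimensional complex Hilbert space, ‖PQ‖ = 1 (operator norm) if and only if the ranges of P and Q have a nonzero intersection. -/

import Mathlib

open InnerProductSpace in
lemma proj_aux {H : Type*} [NormedAddCommGroup H] [InnerProductSpace ℂ H] [CompleteSpace H]
    (P : H →L[ℂ] H) (hPsa : IsSelfAdjoint P) (hPidem : P ∘L P = P) (v : H) :
    ‖P v‖ ^ 2 + ‖v - P v‖ ^ 2 = ‖v‖ ^ 2 := by
  have hsym := hPsa.isSymmetric
  have horth : (inner ℂ (P v) (v - P v) : ℂ) = 0 := by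
    have h0 : P (v - P v) = 0 := by
      have := congrArg (fun T : H →L[ℂ] H => T v) hPidem
      simp only [ContinuousLinearMap.comp_apply] at this
      simp [map_sub, this]
    have h1 : (inner ℂ (P v) (v - P v) : ℂ) = inner ℂ v (P (v - P v)) := hsym v (v - P v)
    rw [h1, h0, inner_zero_right]
  have := norm_add_sq_eq_norm_sq_add_norm_sq_of_inner_eq_zero _ _ horth
  rw [add_sub_cancel] at this
  linarith

lemma proj_norm_le {H : Type*} [NormedAddCommGroup H] [InnerProductSpace ℂ H] [CompleteSpace H]
    (P : H →L[ℂ] H) (hPsa : IsSelfAdjoint P) (hPidem : P ∘L P = P) (v : H) :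
    ‖P v‖ ≤ ‖v‖ := by
  have h := proj_aux P hPsa hPidem v
  nlinarith [sq_nonneg (‖v - P v‖), norm_nonneg (P v), norm_nonneg v]

lemma proj_fix_of_norm_eq {H : Type*} [NormedAddCommGroup H] [InnerProductSpace ℂ H] [CompleteSpace H]
    (P : H →L[ℂ] H) (hPsa : IsSelfAdjoint P) (hPidem : P ∘L P = P) (v : H)
    (h : ‖P v‖ = ‖v‖) : P v = v := by
  have h2 := proj_aux P hPsa hPidem v
  rw [h] at h2
  have : ‖v - P v‖ = 0 := by nlinarith [norm_nonneg (v - P v)]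
  have := norm_eq_zero.mp this
  rw [sub_eq_zero] at this
  exact this.symm

theorem opNorm_projection_comp_eq_one_iff
    {H : Type*} [NormedAddCommGroup H] [InnerProductSpace ℂ H] [FiniteDimensional ℂ H]
    (P Q : H →L[ℂ] H)
    (hPsa : IsSelfAdjoint P) (hPidem : P ∘L P = P)
    (hQsa : IsSelfAdjoint Q) (hQidem : Q ∘L Q = Q) :
    ‖P ∘L Q‖ = 1 ↔
      ∃ v : H, v ≠ 0 ∧ v ∈ LinearMap.range (P : H →ₗ[ℂ] H) ∧
        v ∈ LinearMap.range (Q : H →ₗ[ℂ] H) := by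
  constructor
  · intro hnorm
    -- norm attained on the sphere
    have hne : (Metric.sphere (0:H) 1).Nonempty := by
      by_contra hempty
      have hzero : ∀ v : H, v = 0 := by
        intro v
        by_contra hv
        exact hempty ⟨‖v‖⁻¹ • v, by
          simp [norm_smul, norm_inv, inv_mul_cancel₀ (norm_ne_zero_iff.mpr hv)]⟩
      have : (P ∘L Q : H →L[ℂ] H) = 0 := by ext v; simp [hzero v]
      rw [this, norm_zero] at hnorm
      exact one_ne_zero hnorm.symm
    have hcpt : IsCompact (Metric.sphere (0:H) 1) := isCompact_sphere 0 1
    have hcont : ContinuousOn (fun v : H => ‖(P ∘L Q) v‖) (Metric.sphere (0:H) 1) :=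
      (continuous_norm.comp (P ∘L Q).continuous).continuousOn
    obtain ⟨v, hvmem, hvmax⟩ := hcpt.exists_isMaxOn hne hcont
    have hv1 : ‖v‖ = 1 := by simpa using hvmem
    -- ‖PQ v‖ = 1
    have hle : ∀ w : H, ‖(P ∘L Q) w‖ ≤ ‖(P ∘L Q) v‖ * ‖w‖ := by
      intro w
      rcases eq_or_ne w 0 with rfl | hw
      · simp
      · have hmem : ‖w‖⁻¹ • w ∈ Metric.sphere (0:H) 1 := by
          simp [norm_smul, inv_mul_cancel₀ (norm_ne_zero_iff.mpr hw)]
        have hmax := hvmax hmem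
        simp only [Set.mem_setOf_eq] at hmax
        rw [ContinuousLinearMap.map_smul_of_tower, norm_smul, norm_inv, norm_norm] at hmax
        have hwpos : (0:ℝ) < ‖w‖ := norm_pos_iff.mpr hw
        calc ‖(P ∘L Q) w‖ = ‖w‖ * (‖w‖⁻¹ * ‖(P ∘L Q) w‖) := by
              field_simp
          _ ≤ ‖w‖ * ‖(P ∘L Q) v‖ :=
              mul_le_mul_of_nonneg_left hmax (le_of_lt hwpos)
          _ = ‖(P ∘L Q) v‖ * ‖w‖ := mul_comm _ _
    have hople : ‖P ∘L Q‖ ≤ ‖(P ∘L Q) v‖ :=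
      ContinuousLinearMap.opNorm_le_bound _ (norm_nonneg _) hle
    have hPQv : ‖(P ∘L Q) v‖ = 1 := by
      have h1 : ‖(P ∘L Q) v‖ ≤ ‖P ∘L Q‖ * ‖v‖ := (P ∘L Q).le_opNorm v
      rw [hv1, mul_one, hnorm] at h1
      rw [hnorm] at hople
      linarith
    -- chain of inequalities
    have hQv : ‖Q v‖ = 1 := by
      have h1 : ‖P (Q v)‖ ≤ ‖Q v‖ := proj_norm_le P hPsa hPidem (Q v)
      have h2 : ‖Q v‖ ≤ ‖v‖ := proj_norm_le Q hQsa hQidem v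
      have : ‖P (Q v)‖ = ‖(P ∘L Q) v‖ := rfl
      rw [this, hPQv] at h1
      rw [hv1] at h2
      linarith
    have hQfix : Q (Q v) = Q v := by
      have := congrArg (fun T : H →L[ℂ] H => T v) hQidem
      simpa using this
    have hPfix : P (Q v) = Q v := by
      apply proj_fix_of_norm_eq P hPsa hPidem
      have : ‖P (Q v)‖ = ‖(P ∘L Q) v‖ := rfl
      rw [this, hPQv, hQv]
    refine ⟨Q v, ?_, ⟨Q v, hPfix⟩, ⟨v, rfl⟩⟩
    intro h0
    rw [h0, norm_zero] at hQv
    norm_num at hQv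
  · rintro ⟨v, hv, ⟨a, ha⟩, ⟨b, hb⟩⟩
    simp only [ContinuousLinearMap.coe_coe] at ha hb
    have hPv : P v = v := by
      rw [← ha]
      have := congrArg (fun T : H →L[ℂ] H => T a) hPidem
      simpa using this
    have hQv : Q v = v := by
      rw [← hb]
      have := congrArg (fun T : H →L[ℂ] H => T b) hQidem
      simpa using this
    have hfix : (P ∘L Q) v = v := by simp [hQv, hPv]
    have hge : 1 ≤ ‖P ∘L Q‖ := by
      have h1 : ‖(P ∘L Q) v‖ ≤ ‖P ∘L Q‖ * ‖v‖ := (P ∘L Q).le_opNorm v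
      rw [hfix] at h1
      have hvpos : (0:ℝ) < ‖v‖ := norm_pos_iff.mpr hv
      nlinarith [norm_nonneg (P ∘L Q)]
    have hle : ‖P ∘L Q‖ ≤ 1 := by
      apply ContinuousLinearMap.opNorm_le_bound _ zero_le_one
      intro w
      rw [one_mul]
      calc ‖(P ∘L Q) w‖ = ‖P (Q w)‖ := rfl
        _ ≤ ‖Q w‖ := proj_norm_le P hPsa hPidem (Q w)
        _ ≤ ‖w‖ := proj_norm_le Q hQsa hQidem w
    linarith
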